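/- Let R be a principal ideal domain, Λ a free R-module of rank 2m with a non-degenerate alternating form of square-free level N (i.e. N·Λ^# ⊆ Λ ⊆ Λ^# with N square-free), and Z a primitive totally isotropic submodule of Λ of rank r. Then there exist a basis e_1,…,e_r of Z and vectors f_1,…,f_r ∈ Λ spanning a totally isotropic submodule with ⟨e_i,f_j⟩ = d_i δ_{ij}, d_i | N, such that M = ⊕ R e_i ⊕ ⊕ R f_i splits off orthogonally: Λ = M ⊥ Λ'. -/

import Mathlib

/-- Divide a linear functional by a nonzero scalar that divides all its values. -/
lemma exists_div_lmap {R : Type*} [CommRing R] [IsDomain R] {Λ : Type*} [AddCommGroup Λ]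
    [Module R Λ] (d : R) (hd : d ≠ 0) (φ : Λ →ₗ[R] R) (h : ∀ x, d ∣ φ x) :
    ∃ ψ : Λ →ₗ[R] R, ∀ x, d * ψ x = φ x := by
  choose g hg using h
  refine ⟨⟨⟨g, ?_⟩, ?_⟩, fun x => (hg x).symm⟩
  · intro x y
    apply mul_left_cancel₀ hd
    rw [← hg (x + y), map_add, mul_add, ← hg x, ← hg y]
  · intro c x
    apply mul_left_cancel₀ hd
    simp only [RingHom.id_apply, smul_eq_mul]
    rw [← hg (c • x), map_smul, smul_eq_mul, mul_left_comm, ← hg x]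

/-- In a PID, the factors of a squarefree element are coprime. -/
lemma isCoprime_of_squarefree_mul {R : Type*} [CommRing R] [IsDomain R]
    [IsPrincipalIdealRing R] {a b : R} (h : Squarefree (a * b)) : IsCoprime a b := by
  set I : Ideal R := Ideal.span {a, b}
  obtain ⟨g, hg⟩ := (inferInstance : Submodule.IsPrincipal I).principal
  have ha : a ∈ I := Ideal.subset_span (by simp)
  have hb : b ∈ I := Ideal.subset_span (by simp)
  rw [hg] at ha hb
  rw [show Submodule.span R {g} = Ideal.span {g} from rfl, Ideal.mem_span_singleton'] at ha hb
  obtain ⟨u, hu⟩ := ha; obtain ⟨v, hv⟩ := hb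
  have hgu : IsUnit g := by
    refine h g ⟨u * v, ?_⟩
    rw [← hu, ← hv]; ring
  have : I = ⊤ := by
    rw [hg, show Submodule.span R {g} = Ideal.span {g} from rfl, Ideal.span_singleton_eq_top]
    exact hgu
  have h1 : (1 : R) ∈ I := this ▸ Submodule.mem_top
  obtain ⟨x, y, hxy⟩ := Ideal.mem_span_pair.mp h1
  exact ⟨x, y, hxy⟩

/-- A primitive submodule of a finite free module over a PID has a complement. -/
lemma exists_isCompl_of_primitive {R : Type*} [CommRing R] [IsDomain R]
    [IsPrincipalIdealRing R] {Λ : Type*} [AddCommGroup Λ] [Module R Λ] [Module.Free R Λ]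
    [Module.Finite R Λ] (Z : Submodule R Λ)
    (hZprim : ∀ (x : Λ) (c : R), c ≠ 0 → c • x ∈ Z → x ∈ Z) :
    ∃ C : Submodule R Λ, IsCompl Z C := by
  have : NoZeroSMulDivisors R (Λ ⧸ Z) := by
    constructor
    intro c x h
    by_cases hc : c = 0
    · exact Or.inl hc
    · refine Or.inr ?_
      obtain ⟨y, rfl⟩ := Z.mkQ_surjective x
      rw [← map_smul, Submodule.mkQ_apply, Submodule.Quotient.mk_eq_zero] at h
      rw [Submodule.mkQ_apply, Submodule.Quotient.mk_eq_zero]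
      exact hZprim y c hc h
  obtain ⟨s, hs⟩ := Module.projective_lifting_property Z.mkQ LinearMap.id Z.mkQ_surjective
  refine ⟨LinearMap.range s, ⟨?_, ?_⟩⟩
  · rw [Submodule.disjoint_def]
    rintro x hxZ ⟨y, rfl⟩
    have hmk : Z.mkQ (s y) = y := congrFun (congrArg DFunLike.coe hs) y
    have hy : y = 0 := by
      rw [← hmk, Submodule.mkQ_apply, Submodule.Quotient.mk_eq_zero]; exact hxZ
    rw [hy, map_zero]
  · rw [codisjoint_iff_le_sup]
    intro x _
    have : x - s (Z.mkQ x) ∈ Z := by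
      rw [← Submodule.Quotient.mk_eq_zero, ← Submodule.mkQ_apply, map_sub]
      have : Z.mkQ (s (Z.mkQ x)) = Z.mkQ x := congrFun (congrArg DFunLike.coe hs) (Z.mkQ x)
      rw [this, sub_self]
    have hx : x = (x - s (Z.mkQ x)) + s (Z.mkQ x) := by abel
    rw [hx]
    exact Submodule.add_mem_sup this ⟨Z.mkQ x, rfl⟩

set_option maxHeartbeats 2000000 in
theorem aux_split {R : Type*} [CommRing R] [IsDomain R] [IsPrincipalIdealRing R]
    (N : R) (hN0 : N ≠ 0) (hNsf : Squarefree N) :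
    ∀ (r : ℕ) (Λ : Type*) [AddCommGroup Λ] [Module R Λ] [Module.Free R Λ] [Module.Finite R Λ]
      (B : LinearMap.BilinForm R Λ), (∀ x, B x x = 0) → (∀ x, (∀ y, B x y = 0) → x = 0) →
      (∀ φ : Λ →ₗ[R] R, ∃ v : Λ, ∀ x, N * φ x = B v x) →
      ∀ (Z : Submodule R Λ), Module.finrank R ↥Z = r →
      (∀ (x : Λ) (c : R), c ≠ 0 → c • x ∈ Z → x ∈ Z) →
      (∀ x ∈ Z, ∀ y ∈ Z, B x y = 0) →
      ∃ (e f : Fin r → Λ) (d : Fin r → R) (Λ' : Submodule R Λ),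
        (∀ i, e i ∈ Z) ∧
        LinearIndependent R e ∧
        Submodule.span R (Set.range e) = Z ∧
        (∀ i, d i ∣ N) ∧
        (∀ i j, B (f i) (f j) = 0) ∧
        (∀ i j, B (e i) (f j) = if i = j then d i else 0) ∧
        IsCompl (Submodule.span R (Set.range e ∪ Set.range f)) Λ' ∧
        (∀ x ∈ Submodule.span R (Set.range e ∪ Set.range f), ∀ y ∈ Λ', B x y = 0) := by
  intro r
  induction r with
  | zero =>
    intro Λ _ _ _ _ B halt hnd hlevel Z hZrank hZprim hZiso
    refine ⟨Fin.elim0, Fin.elim0, Fin.elim0, ⊤, fun i => i.elim0, linearIndependent_empty_type,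
      ?_, fun i => i.elim0, fun i => i.elim0, fun i => i.elim0, ?_, ?_⟩
    · have hZbot : Z = ⊥ := by
        rw [eq_bot_iff]
        intro z hz
        obtain ⟨a, ha0, ha⟩ := Module.finrank_eq_zero_iff.mp hZrank ⟨z, hz⟩
        have : a • z = 0 := congrArg Subtype.val ha
        have := (smul_eq_zero.mp this).resolve_left ha0
        simp [this]
      rw [Set.range_eq_empty, Submodule.span_empty, hZbot]
    · rw [Set.range_eq_empty, Set.union_empty, Submodule.span_empty]
      exact isCompl_bot_top
    · intro x hx y _
      rw [Set.range_eq_empty, Set.union_empty, Submodule.span_empty,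
        Submodule.mem_bot] at hx
      simp [hx]
  | succ r ih =>
    intro Λ _ _ _ _ B halt hnd hlevel Z hZrank hZprim hZiso
    -- skew-symmetry
    have hskew : ∀ x y : Λ, B x y = - B y x := by
      intro x y
      have h := halt (x + y)
      simp only [map_add, LinearMap.add_apply, halt x, halt y] at h
      linear_combination h
    -- basis vector e₁ of Z
    let bZ : Module.Basis (Fin (r + 1)) R ↥Z := (Module.finBasis R ↥Z).reindex (finCongr hZrank)
    set e₁ : Λ := ↑(bZ 0) with he₁def
    have he₁Z : e₁ ∈ Z := (bZ 0).2
    -- a functional with φ e₁ = 1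
    obtain ⟨C, hC⟩ := exists_isCompl_of_primitive Z hZprim
    let φ : Λ →ₗ[R] R := (bZ.coord 0) ∘ₗ (Z.linearProjOfIsCompl C hC)
    have hφe₁ : φ e₁ = 1 := by
      have h1 : Z.linearProjOfIsCompl C hC e₁ = bZ 0 :=
        Submodule.linearProjOfIsCompl_apply_left hC (bZ 0)
      simp [φ, h1]
    obtain ⟨v, hv⟩ := hlevel φ
    have hBve₁ : B v e₁ = N := by rw [← hv e₁, hφe₁, mul_one]
    -- the ideal of values B e₁
    set d₁ : R := Submodule.IsPrincipal.generator (LinearMap.range (B e₁)) with hd₁def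
    have hd₁dvd : ∀ x : Λ, d₁ ∣ B e₁ x := fun x =>
      (Submodule.IsPrincipal.mem_iff_generator_dvd _).mp ⟨x, rfl⟩
    have hBe₁v : B e₁ v = -N := by rw [hskew e₁ v, hBve₁]
    have hd₁N : d₁ ∣ N := by
      have := hd₁dvd v
      rw [hBe₁v] at this
      exact dvd_neg.mp this
    have hd₁0 : d₁ ≠ 0 := by
      rintro h
      rw [h] at hd₁N
      exact hN0 (zero_dvd_iff.mp hd₁N)
    -- coprimality from squarefreeness
    obtain ⟨c, hc⟩ := hd₁N
    have hcop : IsCoprime d₁ c := isCoprime_of_squarefree_mul (by rwa [← hc])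
    obtain ⟨a, b, hab⟩ := hcop
    obtain ⟨w, hw⟩ : ∃ w, B e₁ w = d₁ := by
      have hmem := Submodule.IsPrincipal.generator_mem (LinearMap.range (B e₁))
      exact hmem
    set f₁ : Λ := (-b) • v + (a * d₁) • w with hf₁def
    have hBe₁f₁ : B e₁ f₁ = d₁ := by
      simp only [hf₁def, map_add, map_smul, smul_eq_mul, hBe₁v, hw]
      linear_combination d₁ * hab + b * hc
    have hd₁f₁ : ∀ x, d₁ ∣ B f₁ x := by
      intro x
      have hBvx : B v x = N * φ x := (hv x).symm
      refine ⟨-(b * c) * φ x + a * B w x, ?_⟩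
      simp only [hf₁def, map_add, LinearMap.add_apply, map_smul, LinearMap.smul_apply,
        smul_eq_mul, hBvx]
      linear_combination (-(b * φ x)) * hc
    -- division functionals
    obtain ⟨ge, hge⟩ := exists_div_lmap d₁ hd₁0 (B e₁) hd₁dvd
    obtain ⟨gf, hgf⟩ := exists_div_lmap d₁ hd₁0 (B f₁) hd₁f₁
    have cancel : ∀ {u w : R}, d₁ * u = d₁ * w → u = w := fun h => mul_left_cancel₀ hd₁0 h
    have hge_e₁ : ge e₁ = 0 := cancel (by rw [hge, halt, mul_zero])
    have hge_f₁ : ge f₁ = 1 := cancel (by rw [hge, hBe₁f₁, mul_one])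
    have hBf₁e₁ : B f₁ e₁ = -d₁ := by rw [hskew, hBe₁f₁]
    have hgf_e₁ : gf e₁ = -1 := cancel (by rw [hgf, hBf₁e₁]; ring)
    have hgf_f₁ : gf f₁ = 0 := cancel (by rw [hgf, halt, mul_zero])
    -- projection onto the orthogonal complement of e₁, f₁
    set π : Λ →ₗ[R] Λ := LinearMap.id - ge.smulRight f₁ + gf.smulRight e₁ with hπdef
    have hπ : ∀ x, π x = x - ge x • f₁ + gf x • e₁ := fun x => rfl
    set Λ₁ : Submodule R Λ := LinearMap.ker (B e₁) ⊓ LinearMap.ker (B f₁) with hΛ₁def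
    have hmem₁ : ∀ x : Λ, x ∈ Λ₁ ↔ B e₁ x = 0 ∧ B f₁ x = 0 := by
      intro x
      rw [hΛ₁def, Submodule.mem_inf, LinearMap.mem_ker, LinearMap.mem_ker]
    have hπmem : ∀ x, π x ∈ Λ₁ := by
      intro x
      rw [hmem₁]
      constructor
      · have : B e₁ (π x) = B e₁ x - ge x * B e₁ f₁ + gf x * B e₁ e₁ := by
          rw [hπ]; simp only [map_add, map_sub, map_smul, smul_eq_mul]
        rw [this, halt, hBe₁f₁, mul_zero, add_zero, ← hge x]; ring
      · have : B f₁ (π x) = B f₁ x - ge x * B f₁ f₁ + gf x * B f₁ e₁ := by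
          rw [hπ]; simp only [map_add, map_sub, map_smul, smul_eq_mul]
        rw [this, halt, hBf₁e₁, mul_zero, sub_zero, ← hgf x]; ring
    have hπfix : ∀ x ∈ Λ₁, π x = x := by
      intro x hx
      rw [hmem₁] at hx
      have h1 : ge x = 0 := cancel (by rw [hge, hx.1, mul_zero])
      have h2 : gf x = 0 := cancel (by rw [hgf, hx.2, mul_zero])
      rw [hπ, h1, h2, zero_smul, zero_smul, sub_zero, add_zero]
    have hdecomp : ∀ x : Λ, x = ge x • f₁ - gf x • e₁ + π x := by
      intro x; rw [hπ]; abel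
    -- the hyperbolic-type plane P
    set P : Submodule R Λ := Submodule.span R {e₁, f₁} with hPdef
    have hPΛ₁ : ∀ x ∈ P, x ∈ Λ₁ → x = 0 := by
      intro x hx hx1
      obtain ⟨α, β, rfl⟩ := Submodule.mem_span_pair.mp hx
      rw [hmem₁] at hx1
      have hβ : β * d₁ = 0 := by
        have h := hx1.1
        simp only [map_add, map_smul, smul_eq_mul, halt, hBe₁f₁, mul_zero, zero_add] at h
        exact h
      have hα : α * d₁ = 0 := by
        have h := hx1.2
        simp only [map_add, map_smul, smul_eq_mul, halt, hBf₁e₁, mul_zero, add_zero] at h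
        linear_combination -h
      have hβ0 : β = 0 := (mul_eq_zero.mp hβ).resolve_right hd₁0
      have hα0 : α = 0 := (mul_eq_zero.mp hα).resolve_right hd₁0
      rw [hβ0, hα0, zero_smul, zero_smul, add_zero]
    have hPe₁ : e₁ ∈ P := Submodule.subset_span (by simp)
    have hPf₁ : f₁ ∈ P := Submodule.subset_span (by simp)
    have hPcompl : IsCompl P Λ₁ := by
      constructor
      · rw [Submodule.disjoint_def]
        exact hPΛ₁
      · rw [codisjoint_iff_le_sup]
        intro x _
        rw [hdecomp x]
        exact Submodule.add_mem_sup
          (Submodule.sub_mem _ (Submodule.smul_mem _ _ hPf₁) (Submodule.smul_mem _ _ hPe₁))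
          (hπmem x)
    -- the restricted bilinear form on Λ₁
    set B' : LinearMap.BilinForm R ↥Λ₁ := B.restrict Λ₁ with hB'def
    have hB' : ∀ x y : ↥Λ₁, B' x y = B ↑x ↑y := fun x y => rfl
    have halt' : ∀ x : ↥Λ₁, B' x x = 0 := fun x => halt ↑x
    have hxΛ₁ : ∀ x : ↥Λ₁, B e₁ ↑x = 0 ∧ B f₁ ↑x = 0 := fun x => (hmem₁ ↑x).mp x.2
    have hnd' : ∀ x : ↥Λ₁, (∀ y : ↥Λ₁, B' x y = 0) → x = 0 := by
      intro x hx
      refine Subtype.ext (hnd ↑x fun y => ?_)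
      have hdec : B (↑x : Λ) y = ge y * B ↑x f₁ - gf y * B ↑x e₁ + B ↑x (π y) := by
        conv_lhs => rw [hdecomp y]
        simp only [map_add, map_sub, map_smul, smul_eq_mul]
      have h1 : B (↑x : Λ) e₁ = 0 := by rw [hskew, (hxΛ₁ x).1, neg_zero]
      have h2 : B (↑x : Λ) f₁ = 0 := by rw [hskew, (hxΛ₁ x).2, neg_zero]
      have h3 : B (↑x : Λ) (π y) = 0 := hx ⟨π y, hπmem y⟩
      rw [hdec, h1, h2, h3, mul_zero, mul_zero, sub_zero, add_zero]
    set πr : Λ →ₗ[R] ↥Λ₁ := π.codRestrict Λ₁ hπmem with hπrdef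
    have hπr : ∀ x : Λ, (↑(πr x) : Λ) = π x := fun x => rfl
    have hlevel' : ∀ ψ : ↥Λ₁ →ₗ[R] R, ∃ v' : ↥Λ₁, ∀ x : ↥Λ₁, N * ψ x = B' v' x := by
      intro ψ
      obtain ⟨v₀, hv₀⟩ := hlevel (ψ ∘ₗ πr)
      refine ⟨πr v₀, fun x => ?_⟩
      have hπx : πr ↑x = x := Subtype.ext (hπfix ↑x x.2)
      have hL : N * ψ x = B v₀ ↑x := by
        have := hv₀ ↑x
        rwa [LinearMap.comp_apply, hπx] at this
      have hR : B' (πr v₀) x = B v₀ ↑x := by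
        rw [hB', hπr, hπ]
        simp only [map_add, map_sub, LinearMap.sub_apply, LinearMap.add_apply,
          LinearMap.smul_apply, map_smul, smul_eq_mul]
        rw [(hxΛ₁ x).1, (hxΛ₁ x).2]
        ring
      rw [hL, hR]
    -- Z₁ = Z ∩ Λ₁
    set Z₁ : Submodule R Λ := Z ⊓ Λ₁ with hZ₁def
    have hZ₁Z : Z₁ ≤ Z := inf_le_left
    have hZ₁Λ₁ : Z₁ ≤ Λ₁ := inf_le_right
    have hge_Z : ∀ z ∈ Z, ge z = 0 := fun z hz =>
      cancel (by rw [hge, hZiso e₁ he₁Z z hz, mul_zero])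
    have hπZ : ∀ z ∈ Z, π z ∈ Z₁ := by
      intro z hz
      refine Submodule.mem_inf.mpr ⟨?_, hπmem z⟩
      rw [hπ, hge_Z z hz, zero_smul, sub_zero]
      exact Z.add_mem hz (Z.smul_mem _ he₁Z)
    have hZdec : ∀ z ∈ Z, z = π z - gf z • e₁ := by
      intro z hz
      have h := hdecomp z
      rw [hge_Z z hz, zero_smul] at h
      conv_lhs => rw [h]
      abel
    have hZsup : Submodule.span R {e₁} ⊔ Z₁ = Z := by
      apply le_antisymm
      · refine sup_le ?_ hZ₁Z
        rw [Submodule.span_le, Set.singleton_subset_iff]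
        exact he₁Z
      · intro z hz
        rw [hZdec z hz]
        exact Submodule.sub_mem _ (Submodule.mem_sup_right (hπZ z hz))
          (Submodule.mem_sup_left (Submodule.smul_mem _ _ (Submodule.mem_span_singleton_self e₁)))
    -- rank of Z₁
    set Z₁' : Submodule R ↥Λ₁ := Z₁.comap Λ₁.subtype with hZ₁'def
    have hL : ∃ L : (↥Z₁ × R) →ₗ[R] ↥Z, ∀ p : ↥Z₁ × R, (↑(L p) : Λ) = ↑p.1 + p.2 • e₁ := by
      refine ⟨(Submodule.inclusion hZ₁Z).comp (LinearMap.fst R ↥Z₁ R) +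
        (LinearMap.toSpanSingleton R ↥Z ⟨e₁, he₁Z⟩).comp (LinearMap.snd R ↥Z₁ R), fun p => ?_⟩
      rfl
    obtain ⟨L, hLa⟩ := hL
    have hLbij : Function.Bijective L := by
      constructor
      · rw [← LinearMap.ker_eq_bot, eq_bot_iff]
        rintro ⟨z, t⟩ hzt
        rw [LinearMap.mem_ker] at hzt
        have h0 : (↑z : Λ) + t • e₁ = 0 := by rw [← hLa ⟨z, t⟩, hzt]; rfl
        have ht : t * d₁ = 0 := by
          have h := congrArg (B f₁) h0
          simp only [map_add, map_smul, smul_eq_mul, map_zero, hBf₁e₁] at h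
          have hz0 : B f₁ (↑z : Λ) = 0 := ((hmem₁ ↑z).mp (hZ₁Λ₁ z.2)).2
          rw [hz0] at h
          linear_combination -h
        have ht0 : t = 0 := (mul_eq_zero.mp ht).resolve_right hd₁0
        have hz0 : (↑z : Λ) = 0 := by rw [ht0, zero_smul, add_zero] at h0; exact h0
        have : z = 0 := Subtype.ext hz0
        simp [Prod.ext_iff, this, ht0]
      · rintro ⟨z, hz⟩
        refine ⟨⟨⟨π z, hπZ z hz⟩, -(gf z)⟩, ?_⟩
        apply Subtype.ext
        rw [hLa]
        have := hZdec z hz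
        simp only [neg_smul]
        rw [← sub_eq_add_neg, ← this]
    have hrankZ₁ : Module.finrank R ↥Z₁ = r := by
      have hE := (LinearEquiv.ofBijective L hLbij).finrank_eq
      rw [Module.finrank_prod, Module.finrank_self, hZrank] at hE
      omega
    have hZ₁'rank : Module.finrank R ↥Z₁' = r := by
      rw [← hrankZ₁]
      exact (Submodule.comapSubtypeEquivOfLe hZ₁Λ₁).finrank_eq
    have hprim' : ∀ (x : ↥Λ₁) (c : R), c ≠ 0 → c • x ∈ Z₁' → x ∈ Z₁' := by
      intro x c hc0 hcx
      rw [hZ₁'def, Submodule.mem_comap] at hcx ⊢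
      have : c • (↑x : Λ) ∈ Z₁ := hcx
      exact Submodule.mem_inf.mpr ⟨hZprim ↑x c hc0 (Submodule.mem_inf.mp this).1, x.2⟩
    have hiso' : ∀ x ∈ Z₁', ∀ y ∈ Z₁', B' x y = 0 := by
      intro x hx y hy
      exact hZiso ↑x (Submodule.mem_inf.mp hx).1 ↑y (Submodule.mem_inf.mp hy).1
    obtain ⟨e', f', d', Λ'', he'Z, hli', hspan', hdvd', hff', hef', hcompl', horth'⟩ :=
      ih ↥Λ₁ B' halt' hnd' hlevel' Z₁' hZ₁'rank hprim' hiso'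
    -- assemble the data
    set eT : Fin (r + 1) → Λ := Fin.cons e₁ (fun i => ↑(e' i)) with heT
    set fT : Fin (r + 1) → Λ := Fin.cons f₁ (fun i => ↑(f' i)) with hfT
    set dT : Fin (r + 1) → R := Fin.cons d₁ d' with hdT
    set M₁ : Submodule R Λ :=
      Submodule.map Λ₁.subtype (Submodule.span R (Set.range e' ∪ Set.range f')) with hM₁def
    set Λ' : Submodule R Λ := Λ''.map Λ₁.subtype with hΛ'def
    have he'Λ₁ : ∀ i, B e₁ (↑(e' i) : Λ) = 0 ∧ B f₁ (↑(e' i) : Λ) = 0 :=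
      fun i => (hmem₁ _).mp (e' i).2
    have hf'Λ₁ : ∀ i, B e₁ (↑(f' i) : Λ) = 0 ∧ B f₁ (↑(f' i) : Λ) = 0 :=
      fun i => (hmem₁ _).mp (f' i).2
    -- the combined span
    have hrange : Set.range eT ∪ Set.range fT =
        {e₁, f₁} ∪ (Λ₁.subtype '' (Set.range e' ∪ Set.range f')) := by
      rw [heT, hfT, Fin.range_cons, Fin.range_cons, Set.image_union,
        ← Set.range_comp, ← Set.range_comp]
      ext x
      simp only [Set.mem_union, Set.mem_insert_iff, Set.mem_range, Set.mem_singleton_iff,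
        Function.comp]
      tauto
    have hM : Submodule.span R (Set.range eT ∪ Set.range fT) = P ⊔ M₁ := by
      rw [hrange, Submodule.span_union, Submodule.span_image]
    have hM₁Λ₁ : M₁ ≤ Λ₁ := by
      rw [hM₁def]
      exact Submodule.map_subtype_le _ _
    have hΛ'Λ₁ : Λ' ≤ Λ₁ := by
      rw [hΛ'def]
      exact Submodule.map_subtype_le _ _
    have hmapsup : M₁ ⊔ Λ' = Λ₁ := by
      rw [hM₁def, hΛ'def, ← Submodule.map_sup, codisjoint_iff.mp hcompl'.codisjoint,
        Submodule.map_top, Submodule.range_subtype]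
    have hmapdisj : Disjoint M₁ Λ' := by
      rw [hM₁def, hΛ'def, disjoint_iff, ← Submodule.map_inf _ Λ₁.injective_subtype,
        disjoint_iff.mp hcompl'.disjoint, Submodule.map_bot]
    refine ⟨eT, fT, dT, Λ', ?_, ?_, ?_, ?_, ?_, ?_, ?_, ?_⟩
    · -- each eT i lies in Z
      intro i
      refine Fin.cases ?_ (fun i' => ?_) i
      · simpa [heT] using he₁Z
      · have : (↑(e' i') : Λ) ∈ Z₁ := he'Z i'
        simpa [heT] using hZ₁Z this
    · -- linear independence
      rw [Fintype.linearIndependent_iff]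
      intro g hg
      rw [Fin.sum_univ_succ] at hg
      simp only [heT, Fin.cons_zero, Fin.cons_succ] at hg
      have hg0 : g 0 = 0 := by
        have h := congrArg (B f₁) hg
        simp only [map_add, map_smul, smul_eq_mul, map_zero, map_sum, hBf₁e₁] at h
        have hz : ∀ i ∈ Finset.univ, g i.succ * B f₁ (↑(e' i) : Λ) = 0 := fun i _ => by
          rw [(he'Λ₁ i).2, mul_zero]
        rw [Finset.sum_congr rfl hz, Finset.sum_const_zero, add_zero] at h
        have : g 0 * d₁ = 0 := by linear_combination -h
        exact (mul_eq_zero.mp this).resolve_right hd₁0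
      rw [hg0, zero_smul, zero_add] at hg
      have hsum : (∑ i, g i.succ • e' i) = 0 := by
        apply Subtype.ext
        have : ((∑ i, g i.succ • e' i : ↥Λ₁) : Λ) = ∑ i, g i.succ • (↑(e' i) : Λ) := by
          simp
        rw [this, hg]
        rfl
      have htail := Fintype.linearIndependent_iff.mp hli' (fun i => g i.succ) hsum
      intro i
      refine Fin.cases hg0 (fun i' => htail i') i
    · -- the e's span Z
      rw [heT, Fin.range_cons, Submodule.span_insert]
      have himg : Set.range (fun i => (↑(e' i) : Λ)) = Λ₁.subtype '' Set.range e' := by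
        rw [← Set.range_comp]; rfl
      rw [himg, Submodule.span_image, hspan', hZ₁'def, Submodule.map_comap_subtype,
        inf_eq_right.mpr hZ₁Λ₁]
      exact hZsup
    · -- divisibility
      intro i
      refine Fin.cases ?_ (fun i' => ?_) i
      · simpa [hdT] using (Dvd.intro c hc.symm : d₁ ∣ N)
      · simpa [hdT] using hdvd' i'
    · -- the f's are isotropic
      intro i j
      refine Fin.cases ?_ (fun i' => ?_) i <;> refine Fin.cases ?_ (fun j' => ?_) j
      · simpa [hfT] using halt f₁
      · simpa [hfT] using (hf'Λ₁ j').2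
      · simp only [hfT, Fin.cons_succ, Fin.cons_zero]
        rw [hskew, (hf'Λ₁ i').2, neg_zero]
      · simpa [hfT, hB'] using hff' i' j'
    · -- pairing between e's and f's
      intro i j
      refine Fin.cases ?_ (fun i' => ?_) i <;> refine Fin.cases ?_ (fun j' => ?_) j
      · simpa [heT, hfT, hdT] using hBe₁f₁
      · have : (0 : Fin (r + 1)) ≠ j'.succ := (Fin.succ_ne_zero j').symm
        simp only [heT, hfT, Fin.cons_zero, Fin.cons_succ, if_neg this]
        exact (hf'Λ₁ j').1
      · have : i'.succ ≠ (0 : Fin (r + 1)) := Fin.succ_ne_zero i'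
        simp only [heT, hfT, Fin.cons_succ, Fin.cons_zero, if_neg this]
        rw [hskew, (he'Λ₁ i').2, neg_zero]
      · simp only [heT, hfT, hdT, Fin.cons_succ]
        by_cases h : i' = j'
        · subst h
          simp only [if_pos rfl]
          simpa [hB'] using hef' i' i'
        · have hne : i'.succ ≠ j'.succ := fun hc => h (Fin.succ_inj.mp hc)
          rw [if_neg hne]
          simpa [if_neg h, hB'] using hef' i' j'
    · -- complementarity
      rw [hM]
      constructor
      · rw [Submodule.disjoint_def]
        intro x hx hx'
        obtain ⟨p, hp, q, hq, rfl⟩ := Submodule.mem_sup.mp hx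
        have hqΛ₁ : q ∈ Λ₁ := hM₁Λ₁ hq
        have hxΛ₁ : p + q ∈ Λ₁ := hΛ'Λ₁ hx'
        have hpΛ₁ : p ∈ Λ₁ := by
          have := Λ₁.sub_mem hxΛ₁ hqΛ₁
          simpa using this
        have hp0 : p = 0 := hPΛ₁ p hp hpΛ₁
        rw [hp0, zero_add] at hx' ⊢
        exact (Submodule.disjoint_def.mp hmapdisj) q hq hx'
      · rw [codisjoint_iff, sup_assoc, hmapsup, ← codisjoint_iff]
        exact hPcompl.codisjoint
    · -- orthogonality
      have hgen : ∀ s ∈ Set.range eT ∪ Set.range fT, ∀ y ∈ Λ', B s y = 0 := by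
        intro s hs y hy
        obtain ⟨y'', hy'', rfl⟩ := Submodule.mem_map.mp hy
        rcases hs with ⟨i, rfl⟩ | ⟨i, rfl⟩
        · refine Fin.cases ?_ (fun i' => ?_) i
          · simpa [heT] using ((hmem₁ _).mp y''.2).1
          · simp only [heT, Fin.cons_succ]
            exact horth' (e' i') (Submodule.subset_span (Or.inl (Set.mem_range_self i'))) y'' hy''
        · refine Fin.cases ?_ (fun i' => ?_) i
          · simpa [hfT] using ((hmem₁ _).mp y''.2).2
          · simp only [hfT, Fin.cons_succ]
            exact horth' (f' i') (Submodule.subset_span (Or.inr (Set.mem_range_self i'))) y'' hy''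
      intro x hx y hy
      induction hx using Submodule.span_induction with
      | mem s hs => exact hgen s hs y hy
      | zero => simp
      | add u w hu hw ihu ihw =>
        rw [map_add, LinearMap.add_apply, ihu, ihw, add_zero]
      | smul a u hu ihu =>
        rw [map_smul, LinearMap.smul_apply, ihu, smul_zero]

theorem stmt_1 (R : Type*) [CommRing R] [IsDomain R] [IsPrincipalIdealRing R]
    (Λ : Type*) [AddCommGroup Λ] [Module R Λ] [Module.Free R Λ] [Module.Finite R Λ]
    (m : ℕ) (hrank : Module.finrank R Λ = 2 * m)
    (B : LinearMap.BilinForm R Λ)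
    (halt : ∀ x, B x x = 0)
    (hnd : ∀ x, (∀ y, B x y = 0) → x = 0)
    (N : R) (hN0 : N ≠ 0) (hNsf : Squarefree N)
    (hlevel : ∀ φ : Λ →ₗ[R] R, ∃ v : Λ, ∀ x, N * φ x = B v x)
    (Z : Submodule R Λ) (r : ℕ) (hr : r ≤ m)
    (hZrank : Module.finrank R ↥Z = r)
    (hZprim : ∀ (x : Λ) (c : R), c ≠ 0 → c • x ∈ Z → x ∈ Z)
    (hZiso : ∀ x ∈ Z, ∀ y ∈ Z, B x y = 0) :
    ∃ (e f : Fin r → Λ) (d : Fin r → R) (Λ' : Submodule R Λ),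
      (∀ i, e i ∈ Z) ∧
      LinearIndependent R e ∧
      Submodule.span R (Set.range e) = Z ∧
      (∀ i, d i ∣ N) ∧
      (∀ i j, B (f i) (f j) = 0) ∧
      (∀ i j, B (e i) (f j) = if i = j then d i else 0) ∧
      IsCompl (Submodule.span R (Set.range e ∪ Set.range f)) Λ' ∧
      (∀ x ∈ Submodule.span R (Set.range e ∪ Set.range f), ∀ y ∈ Λ', B x y = 0) := by
  exact aux_split N hN0 hNsf r Λ B halt hnd hlevel Z hZrank hZprim hZiso
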